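/- For every w ∈ ℂ, ∑_{n=0}^∞ ((−w)ⁿ/n!)·(∑_{j=1}^n 1/(2j−1)) = −w·e^(−w)·₂F₂(1,1;3/2,2;w), where the inner sum over j is empty (equal to 0) when n = 0. -/

import Mathlib

open scoped Real
open MeasureTheory

/-- Rising factorial (Pochhammer symbol) `(a)_n`. -/
noncomputable def poch (a : ℂ) (n : ℕ) : ℂ := (ascPochhammer ℂ n).eval a

/-- Confluent hypergeometric function `₁F₁(a;c;w)`. -/
noncomputable def oneF1 (a c w : ℂ) : ℂ :=
  ∑' n : ℕ, poch a n * w ^ n / (poch c n * n.factorial)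

/-- The hypergeometric function `₂F₂(1,1;3/2,2;w)`. -/
noncomputable def twoF2 (w : ℂ) : ℂ :=
  ∑' n : ℕ, poch 1 n * poch 1 n * w ^ n / (poch (3/2) n * poch 2 n * n.factorial)

/-- The Riemann xi function `ξ(s) = (1/2) s (s-1) π^(-s/2) Γ(s/2) ζ(s)`. -/
noncomputable def xiR (s : ℂ) : ℂ :=
  (1 / 2) * s * (s - 1) * (π : ℂ) ^ (-s / 2) * Complex.Gamma (s / 2) * riemannZeta s

/-- The Riemann Xi function `Ξ(t) = ξ(1/2 + i t)`. -/
noncomputable def XiR (t : ℂ) : ℂ := xiR (1 / 2 + Complex.I * t)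

/-- `ρ(x,z,s) = x^(1/2-s) e^(-z²/8) ₁F₁((1-s)/2; 1/2; z²/4)`. -/
noncomputable def rhoF (x : ℝ) (z s : ℂ) : ℂ :=
  (x : ℂ) ^ ((1 : ℂ) / 2 - s) * Complex.exp (-z ^ 2 / 8) *
    oneF1 ((1 - s) / 2) (1 / 2) (z ^ 2 / 4)

/-- `∇(x,z,s) = ρ(x,z,s) + ρ(x,z,1-s)`. -/
noncomputable def nablaF (x : ℝ) (z s : ℂ) : ℂ := rhoF x z s + rhoF x z (1 - s)

/-- The digamma function `ψ(x) = Γ'(x)/Γ(x)`. -/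
noncomputable def digamma (x : ℝ) : ℝ := deriv Real.Gamma x / Real.Gamma x

/-- The modified Bessel function of order zero, `K₀(x) = ∫₀^∞ e^(-x cosh u) du`. -/
noncomputable def besselK0 (x : ℝ) : ℝ := ∫ u in Set.Ioi (0 : ℝ), Real.exp (-x * Real.cosh u)


noncomputable def Q (n : ℕ) : ℝ := (ascPochhammer ℝ n).eval (3/2)
lemma Q0 : Q 0 = 1 := by simp [Q]
lemma Qsucc (n : ℕ) : Q (n+1) = Q n * (3/2 + n) := by
  simp [Q, ascPochhammer_succ_eval]
lemma Qpos (n : ℕ) : 0 < Q n := by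
  induction n with
  | zero => simp [Q0]
  | succ n ih => rw [Qsucc]; positivity

lemma QCne (n : ℕ) : ((Q n : ℝ) : ℂ) ≠ 0 := by
  exact_mod_cast (Qpos n).ne'
lemma QC0 : ((Q 0 : ℝ) : ℂ) = 1 := by rw [Q0]; norm_num
lemma QCsucc (n : ℕ) : ((Q (n+1) : ℝ) : ℂ) = ((Q n : ℝ) : ℂ) * (3/2 + n) := by
  rw [Qsucc]; push_cast; ring
lemma facne (n : ℕ) : ((n.factorial : ℕ) : ℂ) ≠ 0 := by
  exact_mod_cast (Nat.factorial_pos n).ne'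
lemma halfne (k : ℕ) : ((3:ℂ)/2 + k) ≠ 0 := by
  have : (((3:ℝ)/2 + k : ℝ) : ℂ) ≠ 0 := by
    rw [Complex.ofReal_ne_zero]; positivity
  push_cast at this; exact this

lemma keyfrac (u q c t : ℂ) (hq : q ≠ 0) (hc : c ≠ 0) (hu : u ≠ 0) :
    (u - 1/2) * (-t / (q * u * c)) = -(t/(q*c)) + (1/2) * (t/(q*u*c)) := by
  have hqc : q * c ≠ 0 := mul_ne_zero hq hc
  have hquc : q * u * c ≠ 0 := mul_ne_zero (mul_ne_zero hq hu) hc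
  rw [show -(t/(q*c)) = (-t)/(q*c) from (neg_div _ _).symm,
    show (1/2) * (t/(q*u*c)) = (t/2)/(q*u*c) from by rw [div_div]; ring_nf,
    div_add_div _ _ hqc hquc,
    show (u - 1/2) * (-t / (q * u * c)) = ((u-1/2) * (-t)) / (q*u*c) from mul_div_assoc' _ _ _,
    div_eq_div_iff hquc (mul_ne_zero hqc hquc)]
  ring

noncomputable def Vc (m : ℕ) : ℂ :=
  ∑ j ∈ Finset.range (m+1), (-1:ℂ)^j / (((Q j : ℝ) : ℂ) * ((m-j).factorial : ℂ))

lemma lemA : ∀ m : ℕ, Vc m = 1 / ((2*m+1 : ℂ) * (m.factorial : ℂ)) := by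
  intro m
  match m with
  | 0 => simp [Vc, QC0]
  | m+1 =>
    have hsplit : ((m:ℂ)+1) * Vc (m+1) = ∑ j ∈ Finset.range (m+2),
        (((m+1-j : ℕ):ℂ) * ((-1:ℂ)^j / (((Q j : ℝ) : ℂ) * ((m+1-j).factorial : ℂ)))
         + (j:ℂ) * ((-1:ℂ)^j / (((Q j : ℝ) : ℂ) * ((m+1-j).factorial : ℂ)))) := by
      rw [Vc, Finset.mul_sum]
      apply Finset.sum_congr rfl
      intro j hj
      have hj' : j ≤ m+1 := Nat.lt_succ_iff.mp (Finset.mem_range.mp hj)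
      have hc : ((m+1-j : ℕ):ℂ) = (m:ℂ)+1 - j := by
        push_cast [Nat.cast_sub hj']; ring
      rw [hc]; ring
    have hA : ∑ j ∈ Finset.range (m+2),
        ((m+1-j : ℕ):ℂ) * ((-1:ℂ)^j / (((Q j : ℝ) : ℂ) * ((m+1-j).factorial : ℂ))) = Vc m := by
      rw [Finset.sum_range_succ]
      simp only [Nat.sub_self, Nat.cast_zero, zero_mul, add_zero]
      rw [Vc]
      apply Finset.sum_congr rfl
      intro j hj
      have hj' : j ≤ m := Nat.lt_succ_iff.mp (Finset.mem_range.mp hj)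
      have h1 : m+1-j = (m-j)+1 := by omega
      rw [h1]
      generalize m - j = k
      rw [Nat.factorial_succ]
      have h2 := facne k
      have h3 : ((k:ℂ)+1) ≠ 0 := by
        have : (((k:ℝ)+1 : ℝ) : ℂ) ≠ 0 := by rw [Complex.ofReal_ne_zero]; positivity
        push_cast at this; exact this
      have h5 := QCne j
      push_cast
      field_simp
    have hB : ∑ j ∈ Finset.range (m+2),
        (j:ℂ) * ((-1:ℂ)^j / (((Q j : ℝ) : ℂ) * ((m+1-j).factorial : ℂ)))
        = -Vc m + (1/2) * ∑ k ∈ Finset.range (m+1),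
            (-1:ℂ)^k / (((Q (k+1) : ℝ) : ℂ) * ((m-k).factorial : ℂ)) := by
      rw [Finset.sum_range_succ']
      simp only [Nat.cast_zero, zero_mul, add_zero]
      have e2 : ∀ k ∈ Finset.range (m+1),
          ((k+1 : ℕ):ℂ) * ((-1:ℂ)^(k+1) / (((Q (k+1) : ℝ) : ℂ) * ((m+1-(k+1)).factorial : ℂ)))
          = -((-1:ℂ)^k / (((Q k : ℝ) : ℂ) * ((m-k).factorial : ℂ)))
            + (1/2) * ((-1:ℂ)^k / (((Q (k+1) : ℝ) : ℂ) * ((m-k).factorial : ℂ))) := by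
        intro k hk
        have h4 : m+1-(k+1) = m-k := by omega
        rw [h4, QCsucc,
          show ((k+1:ℕ):ℂ) = ((3/2+(k:ℂ)) - 1/2) from by push_cast; ring,
          show ((-1:ℂ))^(k+1) = -((-1:ℂ)^k) from by rw [pow_succ]; ring]
        exact keyfrac _ _ _ _ (QCne k) (facne (m-k)) (halfne k)
      rw [Finset.sum_congr rfl e2, Finset.sum_add_distrib, Finset.sum_neg_distrib,
        ← Finset.mul_sum, Vc]
    have hT : ∑ k ∈ Finset.range (m+1),
        (-1:ℂ)^k / (((Q (k+1) : ℝ) : ℂ) * ((m-k).factorial : ℂ))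
        = 1/(((m+1).factorial : ℂ)) - Vc (m+1) := by
      have hx : Vc (m+1) = (∑ k ∈ Finset.range (m+1),
          -((-1:ℂ)^k / (((Q (k+1) : ℝ) : ℂ) * ((m-k).factorial : ℂ)))) + 1/(((m+1).factorial : ℂ)) := by
        rw [Vc, Finset.sum_range_succ']
        congr 1
        · apply Finset.sum_congr rfl
          intro k hk
          have h4 : m+1-(k+1) = m-k := by omega
          rw [h4, pow_succ]
          ring
        · rw [QC0]; simp
      rw [hx, Finset.sum_neg_distrib]
      ring
    have hmain : ((m:ℂ)+1) * Vc (m+1) =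
        Vc m + (-Vc m + (1/2) * (1/(((m+1).factorial : ℂ)) - Vc (m+1))) := by
      rw [hsplit, Finset.sum_add_distrib, hA, hB, hT]
    have hF := facne (m+1)
    have h23 : (2*((m:ℂ)+1)+1) ≠ 0 := by
      have : ((2*((m:ℝ)+1)+1 : ℝ) : ℂ) ≠ 0 := by rw [Complex.ofReal_ne_zero]; positivity
      push_cast at this; exact this
    push_cast at hmain hF h23 ⊢
    field_simp at hmain
    rw [eq_div_iff (mul_ne_zero h23 hF)]
    linear_combination hmain

lemma cancelfrac1 (x q f p t : ℂ) (hx : x ≠ 0) (hq : q ≠ 0) (hf : f ≠ 0) (hp : p ≠ 0) :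
    x * (t / (q * (x*f) * p)) = t / (q * f * p) := by field_simp

lemma cancelfrac2 (p q f t : ℂ) (hq : q ≠ 0) (hf : f ≠ 0) (hp : p ≠ 0) :
    p * (t / (q * f * p)) = t / (q * f) := by field_simp

noncomputable def ac (n : ℕ) : ℂ := ∑ j ∈ Finset.range n, 1 / (2 * ((j:ℂ) + 1) - 1)

noncomputable def Uc (n : ℕ) : ℂ :=
  ∑ j ∈ Finset.range (n+1),
    (-1:ℂ)^j / (((Q j : ℝ) : ℂ) * ((n-j).factorial : ℂ) * ((j:ℂ)+1))

lemma natne (k : ℕ) : ((k:ℂ)+1) ≠ 0 := by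
  have : (((k:ℝ)+1 : ℝ) : ℂ) ≠ 0 := by rw [Complex.ofReal_ne_zero]; positivity
  push_cast at this; exact this

lemma lemB : ∀ n : ℕ, Uc n = ac (n+1) / ((n+1).factorial : ℂ) := by
  intro n
  induction n with
  | zero => simp [Uc, ac, QC0]; norm_num
  | succ n ih =>
    have hsplit : ((n:ℂ)+2) * Uc (n+1) = ∑ j ∈ Finset.range (n+2),
        (((n+1-j : ℕ):ℂ) * ((-1:ℂ)^j / (((Q j : ℝ) : ℂ) * ((n+1-j).factorial : ℂ) * ((j:ℂ)+1)))
         + ((j:ℂ)+1) * ((-1:ℂ)^j / (((Q j : ℝ) : ℂ) * ((n+1-j).factorial : ℂ) * ((j:ℂ)+1)))) := by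
      rw [Uc, Finset.mul_sum]
      apply Finset.sum_congr rfl
      intro j hj
      have hj' : j ≤ n+1 := Nat.lt_succ_iff.mp (Finset.mem_range.mp hj)
      have hc : ((n+1-j : ℕ):ℂ) = (n:ℂ)+1 - j := by
        push_cast [Nat.cast_sub hj']; ring
      rw [hc]; ring
    have hA : ∑ j ∈ Finset.range (n+2),
        ((n+1-j : ℕ):ℂ) * ((-1:ℂ)^j / (((Q j : ℝ) : ℂ) * ((n+1-j).factorial : ℂ) * ((j:ℂ)+1)))
        = Uc n := by
      rw [Finset.sum_range_succ]
      simp only [Nat.sub_self, Nat.cast_zero, zero_mul, add_zero]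
      rw [Uc]
      apply Finset.sum_congr rfl
      intro j hj
      have hj' : j ≤ n := Nat.lt_succ_iff.mp (Finset.mem_range.mp hj)
      have h1 : n+1-j = (n-j)+1 := by omega
      rw [h1]
      generalize n - j = k
      rw [Nat.factorial_succ,
        show (((k+1) * k.factorial : ℕ) : ℂ) = ((k:ℂ)+1) * (k.factorial : ℂ) from by push_cast; ring,
        show ((k+1 : ℕ):ℂ) = (k:ℂ)+1 from by push_cast; ring]
      exact cancelfrac1 _ _ _ _ _ (natne k) (QCne j) (facne k) (natne j)
    have hB : ∑ j ∈ Finset.range (n+2),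
        ((j:ℂ)+1) * ((-1:ℂ)^j / (((Q j : ℝ) : ℂ) * ((n+1-j).factorial : ℂ) * ((j:ℂ)+1)))
        = Vc (n+1) := by
      rw [Vc]
      apply Finset.sum_congr rfl
      intro j hj
      exact cancelfrac2 _ _ _ _ (QCne j) (facne (n+1-j)) (natne j)
    have hmain : ((n:ℂ)+2) * Uc (n+1) = Uc n + Vc (n+1) := by
      rw [hsplit, Finset.sum_add_distrib, hA, hB]
    rw [ih, lemA (n+1)] at hmain
    have hrec : ac (n+1+1) = ac (n+1) + 1 / (2 * ((n:ℂ)+1) + 1) := by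
      rw [ac, Finset.sum_range_succ, ← ac]
      push_cast; ring_nf
    have hF1 := facne (n+1)
    have hF2 := facne (n+2)
    have h23 : (2*((n:ℂ)+1)+1) ≠ 0 := by
      have : ((2*((n:ℝ)+1)+1 : ℝ) : ℂ) ≠ 0 := by rw [Complex.ofReal_ne_zero]; positivity
      push_cast at this; exact this
    have hfs : (((n+2).factorial : ℕ) : ℂ) = ((n:ℂ)+2) * ((n+1).factorial : ℂ) := by
      rw [Nat.factorial_succ]; push_cast; ring
    rw [hrec]
    rw [show ((n:ℕ)+1+1) = (n+2 : ℕ) from rfl, hfs]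
    have hn2 : ((n:ℂ)+2) ≠ 0 := by
      have : (((n:ℝ)+2 : ℝ) : ℂ) ≠ 0 := by rw [Complex.ofReal_ne_zero]; positivity
      push_cast at this; exact this
    push_cast at hmain
    field_simp at hmain
    have hmain2 : ((n:ℂ)+2) * Uc (n+1) * ((n+1).factorial : ℂ) * (2*((n:ℂ)+1)+1)
        = ac (n+1) * (2*((n:ℂ)+1)+1) + 1 := by
      linear_combination hmain
    rw [eq_div_iff (mul_ne_zero hn2 hF1)]
    apply mul_right_cancel₀ h23
    have hexp : (ac (n+1) + 1/(2*((n:ℂ)+1)+1)) * (2*((n:ℂ)+1)+1)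
        = ac (n+1) * (2*((n:ℂ)+1)+1) + 1 := by
      field_simp
    rw [hexp]
    linear_combination hmain2

lemma Qge (n : ℕ) : (n.factorial : ℝ) ≤ Q n := by
  induction n with
  | zero => simp [Q0]
  | succ n ih =>
    rw [Qsucc, Nat.factorial_succ]
    push_cast
    calc ((n:ℝ)+1) * n.factorial ≤ (3/2 + n) * Q n := by
          apply mul_le_mul (by linarith) ih (by positivity) (by
            have := Qpos n; positivity)
      _ = Q n * (3/2 + n) := by ring


lemma pochQ (n : ℕ) : poch (3/2) n = ((Q n : ℝ) : ℂ) := by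
  unfold poch Q
  rw [← ascPochhammer_map (Complex.ofRealHom) n, show ((3:ℂ)/2) = Complex.ofRealHom (3/2) by norm_num,
    Polynomial.eval_map, Polynomial.eval₂_at_apply]
  rfl

lemma poch1 (n : ℕ) : poch 1 n = (n.factorial : ℂ) := by
  unfold poch; exact ascPochhammer_eval_one ℂ n

lemma poch2 (n : ℕ) : poch 2 n = ((n+1).factorial : ℂ) := by
  have := factorial_mul_ascPochhammer ℂ 1 n
  unfold poch
  push_cast at this ⊢
  rw [show (2:ℂ) = (1:ℂ)+1 by norm_num]
  rw [Nat.factorial_one] at this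
  rw [Nat.add_comm 1 n] at this
  simpa using this

lemma twoF2_eq (w : ℂ) : twoF2 w = ∑' n : ℕ, w^n / (((Q n : ℝ) : ℂ) * ((n:ℂ)+1)) := by
  unfold twoF2
  apply tsum_congr
  intro n
  rw [poch1, poch2, pochQ, Nat.factorial_succ]
  have h1 := facne n
  have h2 := QCne n
  have h3 := natne n
  push_cast
  field_simp

lemma hs1 (w : ℂ) : Summable (fun n : ℕ => ‖(-w)^n / (n.factorial : ℂ)‖) := by
  apply Summable.congr (Real.summable_pow_div_factorial ‖w‖)
  intro n
  rw [norm_div, norm_pow, norm_neg, Complex.norm_natCast]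

lemma hs2 (w : ℂ) : Summable (fun n : ℕ => ‖w^n / (((Q n : ℝ) : ℂ) * ((n:ℂ)+1))‖) := by
  refine Summable.of_nonneg_of_le (fun n => norm_nonneg _) (fun n => ?_)
    (Real.summable_pow_div_factorial ‖w‖)
  ·
    rw [norm_div, norm_pow, norm_mul]
    have e1 : ‖((Q n : ℝ) : ℂ)‖ = Q n := by
      rw [Complex.norm_real, Real.norm_eq_abs, abs_of_pos (Qpos n)]
    have e2 : ‖((n:ℂ)+1)‖ = (n:ℝ)+1 := by
      rw [show ((n:ℂ)+1) = ((n+1 : ℕ) : ℂ) from by push_cast; ring, Complex.norm_natCast]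
      push_cast; ring
    rw [e1, e2]
    apply div_le_div_of_nonneg_left (by positivity) (by positivity)
    calc (n.factorial : ℝ) = n.factorial * 1 := by ring
      _ ≤ Q n * ((n:ℝ)+1) := by
          apply mul_le_mul (Qge n) (by push_cast; linarith [Nat.cast_nonneg (α := ℝ) n])
            (by norm_num) (le_of_lt (Qpos n))


theorem stmt15 (w : ℂ) :
    ∑' n : ℕ, (-w) ^ n / n.factorial * (∑ j ∈ Finset.range n, 1 / (2 * (j + 1 : ℂ) - 1)) =
    -w * Complex.exp (-w) * twoF2 w := by
  have hfs : Summable (fun n : ℕ => (-w)^n / (n.factorial : ℂ) *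
      (∑ j ∈ Finset.range n, 1 / (2 * ((j:ℂ) + 1) - 1))) := by
    apply Summable.of_norm
    refine Summable.of_nonneg_of_le (fun n => norm_nonneg _) (fun n => ?_)
      (Real.summable_pow_div_factorial (2*‖w‖))
    ·
      rw [norm_mul, norm_div, norm_pow, norm_neg, Complex.norm_natCast]
      have hbound : ‖∑ j ∈ Finset.range n, 1 / (2 * ((j:ℂ) + 1) - 1)‖ ≤ n := by
        calc ‖∑ j ∈ Finset.range n, 1 / (2 * ((j:ℂ) + 1) - 1)‖
            ≤ ∑ j ∈ Finset.range n, ‖1 / (2 * ((j:ℂ) + 1) - 1)‖ := norm_sum_le _ _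
          _ ≤ ∑ j ∈ Finset.range n, 1 := by
              apply Finset.sum_le_sum
              intro j hj
              rw [show (2 * ((j:ℂ) + 1) - 1) = ((2*j+1 : ℕ) : ℂ) from by push_cast; ring,
                norm_div, Complex.norm_natCast, norm_one]
              rw [div_le_one (by positivity)]
              push_cast
              linarith [Nat.cast_nonneg (α := ℝ) j]
          _ = n := by simp
      calc ‖w‖^n / (n.factorial:ℝ) * ‖∑ j ∈ Finset.range n, 1 / (2 * ((j:ℂ) + 1) - 1)‖
          ≤ ‖w‖^n / (n.factorial:ℝ) * n := by
            apply mul_le_mul_of_nonneg_left hbound (by positivity)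
        _ ≤ (2*‖w‖)^n / (n.factorial : ℝ) := by
            have h2n : (n:ℝ) ≤ 2^n := by exact_mod_cast (Nat.lt_two_pow_self (n := n)).le
            have hnum : ‖w‖^n * (n:ℝ) ≤ 2^n * ‖w‖^n := by
              calc ‖w‖^n * (n:ℝ) ≤ ‖w‖^n * 2^n :=
                    mul_le_mul_of_nonneg_left h2n (by positivity)
                _ = 2^n * ‖w‖^n := by ring
            calc ‖w‖^n / (n.factorial:ℝ) * n = ‖w‖^n * n / (n.factorial:ℝ) := by ring
              _ ≤ 2^n * ‖w‖^n / (n.factorial:ℝ) :=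
                  div_le_div_of_nonneg_right hnum (by positivity)
              _ = (2*‖w‖)^n / (n.factorial : ℝ) := by rw [mul_pow]
  have h0 : (∑' n : ℕ, (-w)^n / (n.factorial:ℂ) * (∑ j ∈ Finset.range n, 1/(2*((j:ℂ)+1)-1)))
      = ∑' n : ℕ, (-w) * ((-w)^n * Uc n) := by
    rw [Summable.tsum_eq_zero_add hfs]
    have hz : (-w)^0 / ((Nat.factorial 0 : ℕ):ℂ) * (∑ j ∈ Finset.range 0, 1/(2*((j:ℂ)+1)-1)) = 0 := by
      simp
    rw [hz, zero_add]
    apply tsum_congr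
    intro n
    rw [lemB n, pow_succ]
    rw [show ac (n+1) = ∑ j ∈ Finset.range (n+1), 1/(2*((j:ℂ)+1)-1) from rfl]
    ring
  rw [h0, tsum_mul_left]
  have hexp : Complex.exp (-w) = ∑' n : ℕ, (-w)^n / (n.factorial : ℂ) := by
    rw [Complex.exp_eq_exp_ℂ, NormedSpace.exp_eq_tsum_div]
  have hC : Complex.exp (-w) * twoF2 w = ∑' N : ℕ, ∑ kl ∈ Finset.HasAntidiagonal.antidiagonal N,
      ((-w)^kl.1 / (kl.1.factorial : ℂ)) * (w^kl.2 / (((Q kl.2 : ℝ):ℂ) * ((kl.2:ℂ)+1))) := by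
    rw [hexp, twoF2_eq]
    exact tsum_mul_tsum_eq_tsum_sum_antidiagonal_of_summable_norm (hs1 w) (hs2 w)
  have hterm : ∀ N : ℕ, ∑ kl ∈ Finset.HasAntidiagonal.antidiagonal N,
      ((-w)^kl.1 / (kl.1.factorial : ℂ)) * (w^kl.2 / (((Q kl.2 : ℝ):ℂ) * ((kl.2:ℂ)+1)))
      = (-w)^N * Uc N := by
    intro N
    rw [Finset.Nat.sum_antidiagonal_eq_sum_range_succ_mk]
    dsimp only
    have hrefl := Finset.sum_range_reflect (fun k =>
      ((-w)^k / (k.factorial : ℂ)) * (w^(N-k) / (((Q (N-k) : ℝ):ℂ) * (((N-k : ℕ):ℂ)+1)))) (N+1)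
    rw [← hrefl, Uc, Finset.mul_sum]
    apply Finset.sum_congr rfl
    intro j hj
    have hj' : j ≤ N := Nat.lt_succ_iff.mp (Finset.mem_range.mp hj)
    have e1 : N + 1 - 1 - j = N - j := by omega
    have e2 : N - (N - j) = j := by omega
    rw [e1, e2]
    have hadd : N - j + j = N := by omega
    have hw : w^(N-j) * w^j = w^N := by rw [← pow_add, hadd]
    have hsq : ((-1:ℂ))^j * (-1)^j = 1 := by rw [← mul_pow]; norm_num
    have hNj : ((-1:ℂ))^(N-j) = (-1)^N * (-1)^j := by
      calc ((-1:ℂ))^(N-j) = (-1)^(N-j) * ((-1)^j * (-1)^j) := by rw [hsq, mul_one]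
        _ = ((-1)^(N-j) * (-1)^j) * (-1)^j := by ring
        _ = (-1)^(N-j+j) * (-1)^j := by rw [pow_add]
        _ = (-1)^N * (-1)^j := by rw [hadd]
    have h1 := facne (N-j)
    have h2 := QCne j
    have h3 := natne j
    rw [neg_pow w (N-j), neg_pow w N, hNj, ← hw]
    field_simp
  have hsum : ∑' n : ℕ, (-w)^n * Uc n = Complex.exp (-w) * twoF2 w := by
    rw [hC]
    exact tsum_congr fun N => (hterm N).symm
  rw [hsum, mul_assoc]
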